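/- Let K ⊆ ℝⁿ be a convex open set containing 0, and let ψ: ℝⁿ → ℝ ∪ {+∞} be convex with ψ(0) < 0 and K ⊆ dom(ψ) ⊆ closure(K). If ψ_ℓ: ℝⁿ → ℝ ∪ {+∞} satisfy ψ_ℓ(0) < 0 and ψ_ℓ → ψ pointwise on K, then for every x₀ ∈ ℝⁿ, ψ*(x₀) ≤ liminf_{ℓ→∞} ψ_ℓ*(x₀). -/

import Mathlib

open MeasureTheory Filter
open scoped ENNReal RealInnerProductSpace

noncomputable section

abbrev En (n : ℕ) := EuclideanSpace ℝ (Fin n)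

/-- Legendre transform of an `EReal`-valued function: `ψ*(y) = sup_{x ∈ dom ψ} (⟨x,y⟩ - ψ x)`. -/
def legendre {n : ℕ} (ψ : En n → EReal) (y : En n) : EReal :=
  ⨆ x : {x : En n // ψ x < ⊤}, ((⟪x.1, y⟫ : ℝ) : EReal) - ψ x.1

/-- Convexity for `ℝ ∪ {+∞}`-valued functions. -/
def EConvexOn {n : ℕ} (ψ : En n → EReal) : Prop :=
  ∀ x y : En n, ∀ a b : ℝ, 0 ≤ a → 0 ≤ b → a + b = 1 →
    ψ (a • x + b • y) ≤ (a : EReal) * ψ x + (b : EReal) * ψ y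

/-- `t ^ (-s)` with the conventions `0^(-s) = ∞`, `∞^(-s) = 0` (for `s > 0`). -/
def negPow (t : EReal) (s : ℝ) : ℝ≥0∞ :=
  if t = ⊤ then 0 else if t ≤ 0 then ⊤ else ENNReal.ofReal (t.toReal ^ (-s))

/-- `I_p(ψ) = (∫ (ψ*)^{-(n+p)})^{-1/p} ∈ [0,∞]`. -/
def Ip (n : ℕ) (p : ℝ) (ψ : En n → EReal) : ℝ≥0∞ :=
  (∫⁻ x, negPow (legendre ψ x) ((n : ℝ) + p)) ^ (-(1 : ℝ) / p)

lemma ereal_le_of_forall_real_lt {a b : EReal} (h : ∀ r : ℝ, (r : EReal) < a → (r : EReal) ≤ b) :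
    a ≤ b := by
  by_contra hc
  push_neg at hc
  obtain ⟨r, hbr, hra⟩ := EReal.exists_between_coe_real hc
  exact hbr.not_ge (h r hra)

lemma sub_continuousAt (r : ℝ) (t : EReal) :
    ContinuousAt (fun u : EReal => (r : EReal) - u) t := by
  have h1 : ContinuousAt (fun p : EReal × EReal => p.1 + p.2) ((r : EReal), -t) :=
    EReal.continuousAt_add (Or.inl (by simp)) (Or.inl (by simp))
  have h2 : ContinuousAt (fun u : EReal => ((r : EReal), -u)) t :=
    (continuous_const.prodMk continuous_neg).continuousAt
  have h3 : Tendsto (fun u : EReal => ((r : EReal), -u)) (nhds t) (nhds ((r : EReal), -t)) :=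
    h2.tendsto
  simpa [ContinuousAt, sub_eq_add_neg, Function.comp_def] using (h1.tendsto.comp h3 : _)

theorem statement3 {n : ℕ} (K : Set (En n)) (hKconv : Convex ℝ K) (hKopen : IsOpen K)
    (h0K : (0 : En n) ∈ K) (ψ : En n → EReal) (hconv : EConvexOn ψ) (hψ0 : ψ 0 < 0)
    (hdom₁ : K ⊆ {x | ψ x < ⊤}) (hdom₂ : {x | ψ x < ⊤} ⊆ closure K)
    (ψs : ℕ → En n → EReal) (hs0 : ∀ ℓ, ψs ℓ 0 < 0)
    (hptwise : ∀ x ∈ K, Tendsto (fun ℓ => ψs ℓ x) atTop (nhds (ψ x))) (x₀ : En n) :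
    legendre ψ x₀ ≤ atTop.liminf (fun ℓ => legendre (ψs ℓ) x₀) := by
  set L := atTop.liminf (fun ℓ => legendre (ψs ℓ) x₀) with hL
  -- Step 1: for points of K
  have hK : ∀ y ∈ K, ((⟪y, x₀⟫ : ℝ) : EReal) - ψ y ≤ L := by
    intro y hy
    have hyd : ψ y < ⊤ := hdom₁ hy
    have htd := hptwise y hy
    have hev : ∀ᶠ ℓ in atTop, ψs ℓ y < ⊤ := htd.eventually_lt_const hyd
    have h1 : ∀ᶠ ℓ in atTop,
        ((⟪y, x₀⟫ : ℝ) : EReal) - ψs ℓ y ≤ legendre (ψs ℓ) x₀ := by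
      filter_upwards [hev] with ℓ hℓ
      exact le_iSup (fun x : {x : En n // ψs ℓ x < ⊤} =>
        ((⟪x.1, x₀⟫ : ℝ) : EReal) - ψs ℓ x.1) ⟨y, hℓ⟩
    have h2 : Tendsto (fun ℓ => ((⟪y, x₀⟫ : ℝ) : EReal) - ψs ℓ y) atTop
        (nhds (((⟪y, x₀⟫ : ℝ) : EReal) - ψ y)) :=
      ((sub_continuousAt _ _).tendsto).comp htd
    calc ((⟪y, x₀⟫ : ℝ) : EReal) - ψ y
        = atTop.liminf (fun ℓ => ((⟪y, x₀⟫ : ℝ) : EReal) - ψs ℓ y) := h2.liminf_eq.symm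
      _ ≤ L := liminf_le_liminf h1
  -- Step 2: pass to all of dom ψ
  rw [legendre]
  apply iSup_le
  rintro ⟨x, hx⟩
  have hxcl : x ∈ closure K := hdom₂ hx
  have hmem : ∀ t : ℝ, 0 < t → t < 1 → (1 - t) • x ∈ K := by
    intro t ht0 ht1
    have h0int : (0 : En n) ∈ interior K := by rwa [hKopen.interior_eq]
    have := hKconv.combo_interior_closure_mem_interior (a := t) (b := 1 - t) h0int hxcl ht0
      (by linarith) (by ring)
    rw [smul_zero, zero_add] at this
    rwa [hKopen.interior_eq] at this
  have hψconv : ∀ t : ℝ, 0 < t → t < 1 →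
      ψ ((1 - t) • x) ≤ ((1 - t : ℝ) : EReal) * ψ x + (t : EReal) * ψ 0 := by
    intro t ht0 ht1
    have := hconv x 0 (1 - t) t (by linarith) ht0.le (by ring)
    simpa [smul_zero] using this
  by_cases hbot : ψ x = ⊥
  · -- then ψ (x/2) = ⊥ and L = ⊤
    have hz : (1 - (1/2 : ℝ)) • x ∈ K := hmem _ (by norm_num) (by norm_num)
    have hψz : ψ ((1 - (1/2 : ℝ)) • x) = ⊥ := by
      have h := hψconv (1/2) (by norm_num) (by norm_num)
      rw [hbot] at h
      have : ((1 - (1/2 : ℝ) : ℝ) : EReal) * (⊥ : EReal) = ⊥ :=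
        EReal.coe_mul_bot_of_pos (by norm_num)
      rw [this] at h
      rw [EReal.bot_add] at h
      exact le_bot_iff.mp h
    have := hK _ hz
    rw [hψz, EReal.coe_sub_bot] at this
    exact le_trans le_top this
  · lift ψ x to ℝ using ⟨hx.ne, hbot⟩ with s
    apply ereal_le_of_forall_real_lt
    intro r hr
    have hrs : r < ⟪x, x₀⟫ - s := by
      rw [← EReal.coe_sub] at hr
      exact_mod_cast hr
    -- pick t ∈ (0,1) with r < (1-t)*(⟪x,x₀⟫ - s)
    obtain ⟨t, htr, ht1, ht0⟩ :
        ∃ t : ℝ, r < (1 - t) * (⟪x, x₀⟫ - s) ∧ t < 1 ∧ 0 < t := by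
      have hcont : Tendsto (fun t : ℝ => (1 - t) * (⟪x, x₀⟫ - s)) (nhds 0)
          (nhds (⟪x, x₀⟫ - s)) := by
        have hc : Continuous fun t : ℝ => (1 - t) * (⟪x, x₀⟫ - s) := by continuity
        simpa using hc.tendsto 0
      have hev1 : ∀ᶠ t in nhdsWithin (0:ℝ) (Set.Ioi 0), r < (1 - t) * (⟪x, x₀⟫ - s) :=
        eventually_nhdsWithin_of_eventually_nhds (hcont.eventually_const_lt hrs)
      have hev2 : ∀ᶠ t in nhdsWithin (0:ℝ) (Set.Ioi 0), t < 1 :=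
        eventually_nhdsWithin_of_eventually_nhds (gt_mem_nhds one_pos)
      have hev3 : ∀ᶠ t in nhdsWithin (0:ℝ) (Set.Ioi 0), 0 < t :=
        eventually_mem_nhdsWithin
      exact ((hev1.and hev2).and hev3).exists.imp (fun t h => ⟨h.1.1, h.1.2, h.2⟩)
    have hz : (1 - t) • x ∈ K := hmem t ht0 ht1
    have hψz : ψ ((1 - t) • x) ≤ (((1 - t) * s : ℝ) : EReal) := by
      have h := hψconv t ht0 ht1
      have h2 : (t : EReal) * ψ 0 ≤ 0 :=
        mul_nonpos_of_nonneg_of_nonpos (by exact_mod_cast ht0.le) hψ0.le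
      calc ψ ((1 - t) • x) ≤ ((1 - t : ℝ) : EReal) * (s : EReal) + (t : EReal) * ψ 0 := h
        _ ≤ ((1 - t : ℝ) : EReal) * (s : EReal) + 0 := add_le_add_right h2 _
        _ = (((1 - t) * s : ℝ) : EReal) := by rw [add_zero, ← EReal.coe_mul]
    have hinner : ⟪(1 - t) • x, x₀⟫ = (1 - t) * ⟪x, x₀⟫ := real_inner_smul_left x x₀ (1 - t)
    have key : (((1 - t) * (⟪x, x₀⟫ - s) : ℝ) : EReal) ≤ ((⟪(1 - t) • x, x₀⟫ : ℝ) : EReal) - ψ ((1 - t) • x) := by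
      have : (((1 - t) * (⟪x, x₀⟫ - s) : ℝ) : EReal)
          = ((⟪(1 - t) • x, x₀⟫ : ℝ) : EReal) - (((1 - t) * s : ℝ) : EReal) := by
        rw [hinner, ← EReal.coe_sub]
        norm_cast
        ring
      rw [this]
      exact EReal.sub_le_sub le_rfl hψz
    calc (r : EReal) ≤ (((1 - t) * (⟪x, x₀⟫ - s) : ℝ) : EReal) := by exact_mod_cast htr.le
      _ ≤ ((⟪(1 - t) • x, x₀⟫ : ℝ) : EReal) - ψ ((1 - t) • x) := key
      _ ≤ L := hK _ hz
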